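/- (Proposition 2.2, first part.) Let a, b, c ∈ ℂ with c² ≠ 4. Then there exists y ∈ ℂ with y⁴ + cy² + 1 = 0 and H_F(0,y,1) = 0 (i.e. a flex point of C_{a,b,c} lies on the line x = 0) if and only if a² + b² − abc = 0. -/

import Mathlib

/-- The Kuribayashi quartic `F(x,y,z) = x⁴+y⁴+z⁴+a x²y² + b x²z² + c y²z²`. -/
noncomputable def F (a b c x y z : ℂ) : ℂ :=
  x ^ 4 + y ^ 4 + z ^ 4 + a * x ^ 2 * y ^ 2 + b * x ^ 2 * z ^ 2 + c * y ^ 2 * z ^ 2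

/-- The Hessian determinant of the Kuribayashi quartic: the determinant of the
3×3 matrix of second partial derivatives of `F`. -/
noncomputable def HF (a b c x y z : ℂ) : ℂ :=
  Matrix.det
    !![12 * x ^ 2 + 2 * a * y ^ 2 + 2 * b * z ^ 2, 4 * a * x * y, 4 * b * x * z;
       4 * a * x * y, 12 * y ^ 2 + 2 * a * x ^ 2 + 2 * c * z ^ 2, 4 * c * y * z;
       4 * b * x * z, 4 * c * y * z, 12 * z ^ 2 + 2 * b * x ^ 2 + 2 * c * y ^ 2]

lemma HF_eq (a b c y : ℂ) : HF a b c 0 y 1 =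
    (2 * a * y ^ 2 + 2 * b) * (24 * c * y ^ 4 + (144 - 12 * c ^ 2) * y ^ 2 + 24 * c) := by
  simp [HF, Matrix.det_fin_three]
  ring

/-- Proposition 2.2, first part: a flex point of `C_{a,b,c}` lies on the line `x = 0`
iff `a² + b² − abc = 0`. -/
theorem flex_on_x_eq_zero_iff (a b c : ℂ) (hc : c ^ 2 ≠ 4) :
    (∃ y : ℂ, y ^ 4 + c * y ^ 2 + 1 = 0 ∧ HF a b c 0 y 1 = 0) ↔
      a ^ 2 + b ^ 2 - a * b * c = 0 := by
  constructor
  · rintro ⟨y, hq, hH⟩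
    rw [HF_eq] at hH
    -- HF = 72*(a*y^2+b)*(4-c^2)*y^2 modulo the quartic relation
    have key : 72 * (a * y ^ 2 + b) * ((4 : ℂ) - c ^ 2) * y ^ 2 = 0 := by
      linear_combination hH - (24 * c * (2 * a * y ^ 2 + 2 * b)) * hq
    have hy0 : y ≠ 0 := by
      rintro rfl; simp at hq
    have h4 : (4 : ℂ) - c ^ 2 ≠ 0 := by
      intro h; apply hc; linear_combination -h
    have h : a * y ^ 2 + b = 0 := by
      have := mul_eq_zero.mp key
      rcases this with h | h
      · rcases mul_eq_zero.mp h with h | h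
        · rcases mul_eq_zero.mp h with h | h
          · norm_num at h
          · exact h
        · exact absurd h h4
      · exact absurd (pow_eq_zero_iff (by norm_num)|>.mp h) hy0
    linear_combination a ^ 2 * hq + (b - a * y ^ 2 - a * c) * h
  · intro h
    -- find t with t^2 + c*t + 1 = 0 and a*t + b = 0
    obtain ⟨t, ht1, ht2⟩ : ∃ t : ℂ, t ^ 2 + c * t + 1 = 0 ∧ a * t + b = 0 := by
      by_cases ha : a = 0
      · have hb : b = 0 := by
          have : b ^ 2 = 0 := by linear_combination h + (b * c - a) * ha
          exact pow_eq_zero_iff (by norm_num) |>.mp this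
        obtain ⟨s, hs⟩ := IsAlgClosed.exists_pow_nat_eq (c ^ 2 - 4) zero_lt_two
        exact ⟨(-c + s) / 2, by linear_combination hs / 4, by rw [ha, hb]; ring⟩
      · refine ⟨-b / a, ?_, by field_simp; ring⟩
        field_simp
        linear_combination h
    obtain ⟨y, hy⟩ := IsAlgClosed.exists_pow_nat_eq t zero_lt_two
    refine ⟨y, ?_, ?_⟩
    · calc y ^ 4 + c * y ^ 2 + 1 = t ^ 2 + c * t + 1 := by rw [← hy]; ring
        _ = 0 := ht1
    · rw [HF_eq]
      have hq : y ^ 4 + c * y ^ 2 + 1 = 0 := by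
        calc y ^ 4 + c * y ^ 2 + 1 = t ^ 2 + c * t + 1 := by rw [← hy]; ring
        _ = 0 := ht1
      have hab : a * y ^ 2 + b = 0 := by rw [hy]; exact ht2
      linear_combination (24 * c * y ^ 4 + (144 - 12 * c ^ 2) * y ^ 2 + 24 * c) * 2 * hab
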